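/- Let R > 0. For a pair 𝐟 = (f₁,f₂) of odd functions in C^∞([−R,R]) define (𝐀𝐟)(y) = (2/(h_−(y)h_+'(y) − h_−'(y)h_+(y))) · (h_+(y)f₁'(y) + h_+'(y)f₂(y), h_−(y)f₁'(y) + h_−'(y)f₂(y)), and for a pair 𝐠 = (g₁,g₂) of functions in C^∞([−R,R]) with g₁(−y) = −g₂(y) for all y define (𝐀^×𝐠)(y) = ((1/2)∫₀^y (−h_−'(y')g₁(y') + h_+'(y')g₂(y')) dy', (1/2)(h_−(y)g₁(y) − h_+(y)g₂(y))). Then: (i) 𝐀𝐟 is a pair of smooth functions satisfying [𝐀𝐟]₁(−y) = −[𝐀𝐟]₂(y) for all y; (ii) 𝐀^×𝐠 is a pair of odd smooth functions on [−R,R]; (iii) 𝐀(𝐀^×𝐠) = 𝐠 for all such 𝐠; and (iv) 𝐀^×(𝐀𝐟) = 𝐟 for all such 𝐟. -/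

import Mathlib

open Real MeasureTheory intervalIntegral

/-- The height function `h(y) = √(2 + y²) − 2`. -/
noncomputable def hfun (y : ℝ) : ℝ := Real.sqrt (2 + y ^ 2) - 2

/-- `h_−(y) = y − h(y)`. -/
noncomputable def hm (y : ℝ) : ℝ := y - hfun y

/-- `h_+(y) = y + h(y)`. -/
noncomputable def hp (y : ℝ) : ℝ := y + hfun y

/-- The operator `𝐀` turning a pair of odd functions into its half-wave pair. -/
noncomputable def Aop (f : (ℝ → ℝ) × (ℝ → ℝ)) : (ℝ → ℝ) × (ℝ → ℝ) :=
  (fun y => 2 / (hm y * deriv hp y - deriv hm y * hp y) *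
      (hp y * deriv f.1 y + deriv hp y * f.2 y),
   fun y => 2 / (hm y * deriv hp y - deriv hm y * hp y) *
      (hm y * deriv f.1 y + deriv hm y * f.2 y))

/-- The operator `𝐀^×` reversing the half-wave decomposition. -/
noncomputable def Axop (g : (ℝ → ℝ) × (ℝ → ℝ)) : (ℝ → ℝ) × (ℝ → ℝ) :=
  (fun y => (1 / 2) * ∫ t in (0:ℝ)..y, (-(deriv hm t) * g.1 t + deriv hp t * g.2 t),
   fun y => (1 / 2) * (hm y * g.1 y - hp y * g.2 y))

-- auxiliary lemmas

lemma sq_pos (y : ℝ) : (0:ℝ) < 2 + y ^ 2 := by positivity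

lemma sfun_pos (y : ℝ) : 0 < Real.sqrt (2 + y ^ 2) := Real.sqrt_pos.2 (sq_pos y)

lemma sfun_sq (y : ℝ) : Real.sqrt (2 + y ^ 2) ^ 2 = 2 + y ^ 2 :=
  Real.sq_sqrt (sq_pos y).le

lemma one_lt_sfun (y : ℝ) : 1 < Real.sqrt (2 + y ^ 2) := by
  nlinarith [sfun_sq y, sfun_pos y]

lemma contDiff_hfun : ContDiff ℝ (⊤ : ℕ∞) hfun := by
  have : ContDiff ℝ (⊤ : ℕ∞) fun y : ℝ => Real.sqrt (2 + y ^ 2) :=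
    (contDiff_const.add (contDiff_id.pow 2)).sqrt fun x => (sq_pos x).ne'
  exact this.sub contDiff_const

lemma hasDerivAt_hfun (y : ℝ) :
    HasDerivAt hfun (y / Real.sqrt (2 + y ^ 2)) y := by
  have h1 : HasDerivAt (fun y : ℝ => 2 + y ^ 2) (2 * y) y := by
    simpa using (hasDerivAt_pow 2 y).const_add 2
  have h2 := (Real.hasDerivAt_sqrt (sq_pos y).ne').comp y h1
  have h3 : HasDerivAt (fun y : ℝ => Real.sqrt (2 + y ^ 2) - 2)
      (1 / (2 * Real.sqrt (2 + y ^ 2)) * (2 * y)) y := h2.sub_const 2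
  convert h3 using 1
  · rfl
  field_simp

lemma hasDerivAt_hp (y : ℝ) :
    HasDerivAt hp (1 + y / Real.sqrt (2 + y ^ 2)) y :=
  (hasDerivAt_id y).add (hasDerivAt_hfun y)

lemma hasDerivAt_hm (y : ℝ) :
    HasDerivAt hm (1 - y / Real.sqrt (2 + y ^ 2)) y :=
  (hasDerivAt_id y).sub (hasDerivAt_hfun y)

lemma deriv_hp_eq : deriv hp = fun y => 1 + y / Real.sqrt (2 + y ^ 2) :=
  funext fun y => (hasDerivAt_hp y).deriv

lemma deriv_hm_eq : deriv hm = fun y => 1 - y / Real.sqrt (2 + y ^ 2) :=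
  funext fun y => (hasDerivAt_hm y).deriv

lemma contDiff_hp : ContDiff ℝ (⊤ : ℕ∞) hp := contDiff_id.add contDiff_hfun
lemma contDiff_hm : ContDiff ℝ (⊤ : ℕ∞) hm := contDiff_id.sub contDiff_hfun

lemma contDiff_deriv_hp : ContDiff ℝ (⊤ : ℕ∞) (deriv hp) := by
  rw [deriv_hp_eq]
  exact contDiff_const.add (contDiff_id.div
    ((contDiff_const.add (contDiff_id.pow 2)).sqrt fun x => (sq_pos x).ne')
    fun x => (sfun_pos x).ne')

lemma contDiff_deriv_hm : ContDiff ℝ (⊤ : ℕ∞) (deriv hm) := by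
  rw [deriv_hm_eq]
  exact contDiff_const.sub (contDiff_id.div
    ((contDiff_const.add (contDiff_id.pow 2)).sqrt fun x => (sq_pos x).ne')
    fun x => (sfun_pos x).ne')

lemma W_eq (y : ℝ) :
    hm y * deriv hp y - deriv hm y * hp y = 4 - 4 / Real.sqrt (2 + y ^ 2) := by
  have hs := sfun_sq y
  have hs0 := (sfun_pos y).ne'
  rw [deriv_hp_eq, deriv_hm_eq]
  simp only [hm, hp, hfun]
  field_simp
  nlinarith [sfun_sq y]

lemma W_ne (y : ℝ) : hm y * deriv hp y - deriv hm y * hp y ≠ 0 := by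
  rw [W_eq]
  have h1 := one_lt_sfun y
  have h2 := sfun_pos y
  have : 4 / Real.sqrt (2 + y ^ 2) < 4 := by
    rw [div_lt_iff₀ h2]; nlinarith
  linarith

lemma hfun_even (y : ℝ) : hfun (-y) = hfun y := by simp [hfun]
lemma hm_neg (y : ℝ) : hm (-y) = -hp y := by simp [hm, hp, hfun_even]; ring
lemma hp_neg (y : ℝ) : hp (-y) = -hm y := by simp [hm, hp, hfun_even]; ring
lemma deriv_hp_neg (y : ℝ) : deriv hp (-y) = deriv hm y := by
  rw [deriv_hp_eq, deriv_hm_eq]; simp; ring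
lemma deriv_hm_neg (y : ℝ) : deriv hm (-y) = deriv hp y := by
  rw [deriv_hp_eq, deriv_hm_eq]; simp; ring

lemma deriv_odd_even {f : ℝ → ℝ} (hf : Differentiable ℝ f)
    (hodd : ∀ y, f (-y) = -f y) (y : ℝ) : deriv f (-y) = deriv f y := by
  have h1 : HasDerivAt (fun x => f (-x)) (deriv f (-y) * (-1)) y :=
    (hf (-y)).hasDerivAt.comp y (hasDerivAt_neg y)
  have h2 : HasDerivAt (fun x => -f x) (-deriv f y) y := (hf y).hasDerivAt.neg
  rw [funext hodd] at h1
  have := h1.unique h2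
  linarith

lemma contDiff_W : ContDiff ℝ (⊤ : ℕ∞)
    (fun y => hm y * deriv hp y - deriv hm y * hp y) :=
  (contDiff_hm.mul contDiff_deriv_hp).sub (contDiff_deriv_hm.mul contDiff_hp)

lemma W_neg (y : ℝ) : hm (-y) * deriv hp (-y) - deriv hm (-y) * hp (-y)
    = hm y * deriv hp y - deriv hm y * hp y := by
  rw [hm_neg, hp_neg, deriv_hp_neg, deriv_hm_neg]; ring

theorem halfwave_operators (R : ℝ) (hR : 0 < R) :
    (∀ f₁ f₂ : ℝ → ℝ, ContDiff ℝ (⊤ : ℕ∞) f₁ → ContDiff ℝ (⊤ : ℕ∞) f₂ →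
      (∀ y, f₁ (-y) = -f₁ y) → (∀ y, f₂ (-y) = -f₂ y) →
      -- (i) `𝐀𝐟` is a pair of smooth functions with `[𝐀𝐟]₁(−y) = −[𝐀𝐟]₂(y)`
      (ContDiff ℝ (⊤ : ℕ∞) (Aop (f₁, f₂)).1 ∧ ContDiff ℝ (⊤ : ℕ∞) (Aop (f₁, f₂)).2 ∧
        ∀ y ∈ Set.Icc (-R) R, (Aop (f₁, f₂)).1 (-y) = -(Aop (f₁, f₂)).2 y) ∧
      -- (iv) `𝐀^×(𝐀𝐟) = 𝐟`
      (∀ y ∈ Set.Icc (-R) R,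
        (Axop (Aop (f₁, f₂))).1 y = f₁ y ∧ (Axop (Aop (f₁, f₂))).2 y = f₂ y)) ∧
    (∀ g₁ g₂ : ℝ → ℝ, ContDiff ℝ (⊤ : ℕ∞) g₁ → ContDiff ℝ (⊤ : ℕ∞) g₂ →
      (∀ y, g₁ (-y) = -g₂ y) →
      -- (ii) `𝐀^×𝐠` is a pair of odd smooth functions
      (ContDiff ℝ (⊤ : ℕ∞) (Axop (g₁, g₂)).1 ∧ ContDiff ℝ (⊤ : ℕ∞) (Axop (g₁, g₂)).2 ∧
        (∀ y ∈ Set.Icc (-R) R, (Axop (g₁, g₂)).1 (-y) = -(Axop (g₁, g₂)).1 y) ∧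
        (∀ y ∈ Set.Icc (-R) R, (Axop (g₁, g₂)).2 (-y) = -(Axop (g₁, g₂)).2 y)) ∧
      -- (iii) `𝐀(𝐀^×𝐠) = 𝐠`
      (∀ y ∈ Set.Icc (-R) R,
        (Aop (Axop (g₁, g₂))).1 y = g₁ y ∧ (Aop (Axop (g₁, g₂))).2 y = g₂ y)) := by
  have hWinv : ContDiff ℝ (⊤ : ℕ∞)
      (fun y => 2 / (hm y * deriv hp y - deriv hm y * hp y)) :=
    contDiff_const.div contDiff_W W_ne
  constructor
  · -- part about f
    intro f₁ f₂ hf1 hf2 hodd1 hodd2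
    have hdf1 : ContDiff ℝ (⊤ : ℕ∞) (deriv f₁) := (contDiff_infty_iff_deriv.mp hf1).2
    have hdiff1 : Differentiable ℝ f₁ := hf1.differentiable (by simp)
    have hA1 : ContDiff ℝ (⊤ : ℕ∞) (Aop (f₁, f₂)).1 := by
      simp only [Aop]
      exact hWinv.mul ((contDiff_hp.mul hdf1).add (contDiff_deriv_hp.mul hf2))
    have hA2 : ContDiff ℝ (⊤ : ℕ∞) (Aop (f₁, f₂)).2 := by
      simp only [Aop]
      exact hWinv.mul ((contDiff_hm.mul hdf1).add (contDiff_deriv_hm.mul hf2))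
    refine ⟨⟨hA1, hA2, ?_⟩, ?_⟩
    · intro y _
      simp only [Aop]
      rw [W_neg, hp_neg, deriv_hp_neg, deriv_odd_even hdiff1 hodd1, hodd2]
      ring
    · -- (iv)
      intro y _
      have hptw : ∀ t, (-(deriv hm t) * (Aop (f₁, f₂)).1 t
          + deriv hp t * (Aop (f₁, f₂)).2 t) = 2 * deriv f₁ t := by
        intro t
        simp only [Aop]
        have := W_ne t
        field_simp
        ring
      constructor
      · simp only [Axop]
        rw [intervalIntegral.integral_congr (fun t _ => hptw t)]
        have hint : IntervalIntegrable (deriv f₁) volume 0 y :=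
          (hdf1.continuous.intervalIntegrable 0 y)
        rw [intervalIntegral.integral_const_mul,
          intervalIntegral.integral_deriv_eq_sub
            (fun t _ => (hdiff1 t)) hint]
        have h0 : f₁ 0 = 0 := by have := hodd1 0; simp at this; linarith
        rw [h0]; ring
      · simp only [Axop, Aop]
        have := W_ne y
        field_simp
        ring
  · -- part about g
    intro g₁ g₂ hg1 hg2 hodd
    have hodd' : ∀ y, g₂ (-y) = -g₁ y := by
      intro y; have := hodd (-y); rw [neg_neg] at this; linarith
    set ψ : ℝ → ℝ := fun t => -(deriv hm t) * g₁ t + deriv hp t * g₂ t with hψ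
    have hψsmooth : ContDiff ℝ (⊤ : ℕ∞) ψ :=
      ((contDiff_deriv_hm.neg).mul hg1).add (contDiff_deriv_hp.mul hg2)
    have hψcont : Continuous ψ := hψsmooth.continuous
    have hF : ∀ y, HasDerivAt (Axop (g₁, g₂)).1 ((1:ℝ)/2 * ψ y) y := by
      intro y
      have h1 : HasDerivAt (fun u => ∫ t in (0:ℝ)..u, ψ t) (ψ y) y :=
        intervalIntegral.integral_hasDerivAt_right
          (hψcont.intervalIntegrable 0 y)
          (hψcont.stronglyMeasurableAtFilter _ _)
          hψcont.continuousAt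
      simpa only [Axop] using h1.const_mul ((1:ℝ)/2)
    have hF1smooth : ContDiff ℝ (⊤ : ℕ∞) (Axop (g₁, g₂)).1 := by
      rw [contDiff_infty_iff_deriv]
      refine ⟨fun y => (hF y).differentiableAt, ?_⟩
      have : deriv (Axop (g₁, g₂)).1 = fun y => (1:ℝ)/2 * ψ y :=
        funext fun y => (hF y).deriv
      rw [this]
      exact contDiff_const.mul hψsmooth
    have hF2smooth : ContDiff ℝ (⊤ : ℕ∞) (Axop (g₁, g₂)).2 := by
      simp only [Axop]
      exact contDiff_const.mul ((contDiff_hm.mul hg1).sub (contDiff_hp.mul hg2))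
    have hψeven : ∀ t, ψ (-t) = ψ t := by
      intro t
      simp only [hψ]
      rw [deriv_hm_neg, deriv_hp_neg, hodd, hodd']
      ring
    refine ⟨⟨hF1smooth, hF2smooth, ?_, ?_⟩, ?_⟩
    · intro y _
      simp only [Axop]
      have h1 : (∫ t in (0:ℝ)..(-y), ψ t) = -∫ t in (0:ℝ)..y, ψ t := by
        have h2 : (∫ x in (0:ℝ)..y, ψ (-x)) = ∫ x in (-y)..(-(0:ℝ)), ψ x :=
          intervalIntegral.integral_comp_neg ψ
        rw [intervalIntegral.integral_congr (fun t _ => hψeven t), neg_zero] at h2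
        rw [intervalIntegral.integral_symm, ← h2]
      rw [h1]; ring
    · intro y _
      simp only [Axop]
      rw [hm_neg, hp_neg, hodd, hodd']
      ring
    · intro y _
      have hdF : deriv (Axop (g₁, g₂)).1 y = (1:ℝ)/2 * ψ y := (hF y).deriv
      have hW := W_ne y
      constructor
      · simp only [Aop]
        rw [hdF]
        simp only [Axop, hψ]
        field_simp
        ring
      · simp only [Aop]
        rw [hdF]
        simp only [Axop, hψ]
        field_simp
        ring
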